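/- Let t(n,h,k) be the number of (n+1)-node ordered (plane) trees of height h+1 with exactly k nodes at depth h+1. Then for h ≥ 1, t(n,h,k) = Σ_{m=1}^{n-k} C(m+k−1, m−1) · t(n−k, h−1, m). -/

import Mathlib

namespace Paper

/-- Two elements are incomparable. -/
def Incomp {α : Type*} [PartialOrder α] (a b : α) : Prop := ¬ a ≤ b ∧ ¬ b ≤ a

/-- A semiorder: no induced `2+2` and no induced `3+1`. -/
def IsSemiorder (α : Type*) [PartialOrder α] : Prop :=
  (¬ ∃ x y z w : α, y < x ∧ w < z ∧ Incomp x z ∧ Incomp x w ∧ Incomp y z ∧ Incomp y w) ∧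
  (¬ ∃ x y z w : α, z < y ∧ y < x ∧ Incomp x w ∧ Incomp y w ∧ Incomp z w)

/-- There is a chain of `k` elements. -/
def HasChain (α : Type*) [Preorder α] (k : ℕ) : Prop := ∃ c : Fin k → α, StrictMono c

/-- The length of a longest chain (number of edges) is exactly `H`. -/
def HasLength (α : Type*) [Preorder α] (H : ℕ) : Prop :=
  HasChain α (H + 1) ∧ ¬ HasChain α (H + 2)

/-- There is a chain of `k` elements all strictly above `a`. -/
def HasChainAbove {α : Type*} [Preorder α] (a : α) (k : ℕ) : Prop :=
  ∃ c : Fin k → α, StrictMono c ∧ ∀ j, a < c j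

/-- `a` is on the `i`-th level (`i ≥ 1`). -/
def OnLevel {α : Type*} [Preorder α] (a : α) (i : ℕ) : Prop :=
  1 ≤ i ∧ HasChainAbove a (i - 1) ∧ ¬ HasChainAbove a i

/-- Number of isomorphism classes of partial orders on `Fin n` satisfying `pred`. -/
noncomputable def countPosets (n : ℕ) (pred : PartialOrder (Fin n) → Prop) : ℕ :=
  Nat.card (Quot (fun (P Q : {P : PartialOrder (Fin n) // pred P}) =>
    ∃ e : Fin n ≃ Fin n, ∀ a b : Fin n,
      (@LE.le _ P.1.toPreorder.toLE a b ↔ @LE.le _ Q.1.toPreorder.toLE (e a) (e b))))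

/-- Semiorder of length exactly `H`. -/
def SemiLen (n H : ℕ) (P : PartialOrder (Fin n)) : Prop :=
  @IsSemiorder (Fin n) P ∧ @HasLength (Fin n) P.toPreorder H

/-- Semiorder of length at most `h`. -/
def SemiLenLe (n h : ℕ) (P : PartialOrder (Fin n)) : Prop :=
  @IsSemiorder (Fin n) P ∧ ¬ @HasChain (Fin n) P.toPreorder (h + 2)

/-- `f_H^n`. -/
noncomputable def fEx (H n : ℕ) : ℕ := countPosets n (SemiLen n H)

/-- `f_{≤h}^n`. -/
noncomputable def fLe (h n : ℕ) : ℕ := countPosets n (SemiLenLe n h)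

/-- Ordered (plane) trees. -/
inductive PTree where
  | node : List PTree → PTree

def PTree.size : PTree → ℕ
  | .node cs => 1 + (cs.attach.map fun c => PTree.size c.1).sum
decreasing_by have := List.sizeOf_lt_of_mem c.2; simp only [PTree.node.sizeOf_spec] at *; omega

def PTree.height : PTree → ℕ
  | .node cs => (cs.attach.map fun c => PTree.height c.1 + 1).foldr max 0
decreasing_by have := List.sizeOf_lt_of_mem c.2; simp only [PTree.node.sizeOf_spec] at *; omega

def PTree.countDepth : PTree → ℕ → ℕ
  | .node _, 0 => 1
  | .node cs, d + 1 => (cs.attach.map fun c => PTree.countDepth c.1 d).sum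
termination_by t _ => sizeOf t
decreasing_by have := List.sizeOf_lt_of_mem c.2; simp only [PTree.node.sizeOf_spec] at *; omega

/-- Value of a path after the steps in `l` (`true` = up-step, `false` = down-step). -/
def pathVal (l : List Bool) : ℤ := (l.map fun b => if b then (1 : ℤ) else -1).sum

/-- `l` is a Dyck path. -/
def IsDyckPath (l : List Bool) : Prop :=
  pathVal l = 0 ∧ ∀ p, p <+: l → 0 ≤ pathVal p

/-- The height of the path `l` is exactly `H`. -/
def DyckHeightIs (l : List Bool) (H : ℕ) : Prop :=
  (∃ p, p <+: l ∧ pathVal p = H) ∧ ∀ p, p <+: l → pathVal p ≤ (H : ℤ)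

/-- Number of peaks of a path. -/
def peaks (l : List Bool) : ℕ :=
  ((List.range l.length).filter fun i => l.getD i false && !(l.getD (i + 1) true)).length


/-- `t(n,h,k)`: the number of `(n+1)`-node ordered trees of height `h+1` with
exactly `k` nodes at depth `h+1`. -/
noncomputable def t (n h k : ℕ) : ℕ :=
  Nat.card {tr : PTree // tr.size = n + 1 ∧ tr.height = h + 1 ∧ tr.countDepth (h + 1) = k}

-- basic simp lemmas
lemma size_node (cs : List PTree) : (PTree.node cs).size = 1 + (cs.map PTree.size).sum := by
  rw [PTree.size, List.attach_map_val]

lemma height_node (cs : List PTree) :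
    (PTree.node cs).height = (cs.map fun c => c.height + 1).foldr max 0 := by
  rw [PTree.height]
  exact congrArg (List.foldr max 0) (List.attach_map_val (l := cs) (f := fun c => c.height + 1))

lemma countDepth_zero (cs : List PTree) : (PTree.node cs).countDepth 0 = 1 := by
  rw [PTree.countDepth]

lemma countDepth_succ (cs : List PTree) (d : ℕ) :
    (PTree.node cs).countDepth (d + 1) = (cs.map fun c => c.countDepth d).sum := by
  rw [PTree.countDepth]
  exact congrArg List.sum (List.attach_map_val (l := cs) (f := fun c => c.countDepth d))

-- list helpers
lemma sum_map_add {α : Type*} (l : List α) (f g : α → ℕ) :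
    (l.map fun x => f x + g x).sum = (l.map f).sum + (l.map g).sum := by
  induction l with
  | nil => simp
  | cons a l ih => simp [ih]; omega

lemma foldr_max_le_iff (l : List ℕ) (b : ℕ) : l.foldr max 0 ≤ b ↔ ∀ x ∈ l, x ≤ b := by
  induction l with
  | nil => simp
  | cons a l ih => simp [ih]

lemma le_foldr_max {l : List ℕ} {x : ℕ} (h : x ∈ l) : x ≤ l.foldr max 0 := by
  induction l with
  | nil => simp at h
  | cons a l ih =>
    rcases List.mem_cons.mp h with rfl | h
    · simp
    · exact le_trans (ih h) (by simp)

lemma height_child_lt {c : PTree} {cs : List PTree} (h : c ∈ cs) :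
    c.height + 1 ≤ (PTree.node cs).height := by
  rw [height_node]
  exact le_foldr_max (List.mem_map_of_mem h)

lemma height_le_iff {cs : List PTree} {b : ℕ} :
    (PTree.node cs).height ≤ b ↔ ∀ c ∈ cs, c.height + 1 ≤ b := by
  rw [height_node, foldr_max_le_iff]
  simp

lemma height_eq_zero {t : PTree} (h : t.height = 0) : t = .node [] := by
  obtain ⟨cs⟩ := t
  cases cs with
  | nil => rfl
  | cons c cs => have := height_child_lt (List.mem_cons_self (a := c) (l := cs)); omega

lemma size_pos (t : PTree) : 1 ≤ t.size := by
  obtain ⟨cs⟩ := t; rw [size_node]; omega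

lemma countDepth_le_size (t : PTree) (d : ℕ) : t.countDepth d ≤ t.size := by
  induction d generalizing t with
  | zero => obtain ⟨cs⟩ := t; rw [countDepth_zero]; exact size_pos _
  | succ d ih =>
    obtain ⟨cs⟩ := t
    rw [countDepth_succ, size_node]
    have : (cs.map fun c => c.countDepth d).sum ≤ (cs.map PTree.size).sum :=
      List.sum_le_sum (fun c _ => ih c)
    omega

lemma countDepth_succ_lt_size (t : PTree) (d : ℕ) : t.countDepth (d + 1) < t.size := by
  obtain ⟨cs⟩ := t
  rw [countDepth_succ, size_node]
  have : (cs.map fun c => c.countDepth d).sum ≤ (cs.map PTree.size).sum :=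
    List.sum_le_sum (fun c _ => countDepth_le_size c d)
  omega

lemma mem_le_sum {l : List ℕ} {x : ℕ} (h : x ∈ l) : x ≤ l.sum := List.le_sum_of_mem h

lemma countDepth_eq_zero_of_height_lt {t : PTree} {d : ℕ} (h : t.height < d) :
    t.countDepth d = 0 := by
  induction d generalizing t with
  | zero => omega
  | succ d ih =>
    obtain ⟨cs⟩ := t
    rw [countDepth_succ]
    rw [List.sum_eq_zero_iff]
    intro x hx
    simp only [List.mem_map] at hx
    obtain ⟨c, hc, rfl⟩ := hx
    exact ih (by have := height_child_lt hc; omega)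

lemma countDepth_pos_of_le_height {t : PTree} {d : ℕ} (h : d ≤ t.height) :
    1 ≤ t.countDepth d := by
  induction d generalizing t with
  | zero => obtain ⟨cs⟩ := t; rw [countDepth_zero]
  | succ d ih =>
    obtain ⟨cs⟩ := t
    rw [countDepth_succ]
    -- there is a child of height ≥ d
    by_contra hcon
    push_neg at hcon
    have h0 : (cs.map fun c => c.countDepth d).sum = 0 := by omega
    rw [List.sum_eq_zero_iff] at h0
    -- from h : d+1 ≤ height node cs, get child with height ≥ d
    have : ¬ (PTree.node cs).height ≤ d := by omega
    rw [height_le_iff] at this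
    push_neg at this
    obtain ⟨c, hc, hch⟩ := this
    have : 1 ≤ c.countDepth d := ih (by omega)
    have : c.countDepth d = 0 := h0 _ (List.mem_map_of_mem hc)
    omega

lemma le_height_of_countDepth_pos {t : PTree} {d : ℕ} (h : 1 ≤ t.countDepth d) :
    d ≤ t.height := by
  by_contra hcon
  rw [countDepth_eq_zero_of_height_lt (by omega)] at h
  omega

/-! ### prune / harvest / graft -/

def prune : ℕ → PTree → PTree
  | 0, _ => .node []
  | d+1, .node cs => .node (cs.map (prune d))

def harvest : ℕ → PTree → List ℕ
  | 0, .node cs => [cs.length]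
  | d+1, .node cs => (cs.map (harvest d)).flatten

mutual
def graft : ℕ → PTree → List ℕ → PTree × List ℕ
  | 0, _, cs => (.node (List.replicate (cs.headD 0) (.node [])), cs.tail)
  | d+1, .node ts, cs =>
      let r := graftList d ts cs
      (.node r.1, r.2)
  termination_by d _ _ => (d, 0)
def graftList : ℕ → List PTree → List ℕ → List PTree × List ℕ
  | _, [], cs => ([], cs)
  | d, t :: ts, cs =>
      let r1 := graft d t cs
      let r2 := graftList d ts r1.2
      (r1.1 :: r2.1, r2.2)
  termination_by d ts _ => (d, ts.length + 1)
end

lemma height_prune_le (d : ℕ) (t : PTree) : (prune d t).height ≤ d := by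
  induction d generalizing t with
  | zero => obtain ⟨cs⟩ := t; rw [prune]; rw [height_node]; simp
  | succ d ih =>
    obtain ⟨cs⟩ := t
    rw [prune, height_le_iff]
    intro c hc
    simp only [List.mem_map] at hc
    obtain ⟨c', _, rfl⟩ := hc
    have := ih c'
    omega

lemma countDepth_prune {e d : ℕ} (h : e ≤ d) (t : PTree) :
    (prune d t).countDepth e = t.countDepth e := by
  induction e generalizing d t with
  | zero =>
    obtain ⟨cs⟩ := t
    cases d with
    | zero => rw [prune, countDepth_zero, countDepth_zero]
    | succ d => rw [prune, countDepth_zero, countDepth_zero]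
  | succ e ih =>
    obtain ⟨cs⟩ := t
    obtain ⟨d, rfl⟩ : ∃ d', d = d' + 1 := ⟨d - 1, by omega⟩
    rw [prune, countDepth_succ, countDepth_succ, List.map_map]
    congr 1
    apply List.map_congr_left
    intro c _
    exact ih (by omega) c

lemma size_prune_add {d : ℕ} {t : PTree} (h : t.height ≤ d + 1) :
    (prune d t).size + t.countDepth (d + 1) = t.size := by
  induction d generalizing t with
  | zero =>
    obtain ⟨cs⟩ := t
    rw [prune, size_node, countDepth_succ, size_node]
    simp only [List.map_nil, List.sum_nil]
    have hc : ∀ c ∈ cs, c = PTree.node [] := by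
      intro c hc
      apply height_eq_zero
      have := height_child_lt hc
      omega
    have h1 : (cs.map fun c => c.countDepth 0).sum = cs.length := by
      rw [List.map_congr_left (g := fun _ => 1), List.map_const']
      · simp [List.sum_replicate]
      · intro c hcc; rw [hc c hcc]; exact countDepth_zero []
    have h2 : (cs.map PTree.size).sum = cs.length := by
      rw [List.map_congr_left (g := fun _ => 1), List.map_const']
      · simp [List.sum_replicate]
      · intro c hcc; rw [hc c hcc]; rw [size_node]; simp
    omega
  | succ d ih =>
    obtain ⟨cs⟩ := t
    rw [prune, size_node, countDepth_succ, size_node, List.map_map]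
    have key : ∀ c ∈ cs, (prune d c).size + c.countDepth (d + 1) = c.size := by
      intro c hc
      exact ih (by have := height_child_lt hc; omega)
    have : (cs.map fun c => (prune d c).size + c.countDepth (d+1)).sum = (cs.map PTree.size).sum := by
      congr 1; exact List.map_congr_left key
    rw [sum_map_add] at this
    have h2 : (cs.map (PTree.size ∘ prune d)).sum = (cs.map fun c => (prune d c).size).sum := rfl
    omega

lemma harvest_length (d : ℕ) (t : PTree) : (harvest d t).length = t.countDepth d := by
  induction d generalizing t with
  | zero => obtain ⟨cs⟩ := t; rw [harvest, countDepth_zero]; rfl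
  | succ d ih =>
    obtain ⟨cs⟩ := t
    rw [harvest, countDepth_succ, List.length_flatten, List.map_map]
    congr 1
    apply List.map_congr_left
    intro c _
    exact ih c

lemma harvest_sum (d : ℕ) (t : PTree) : (harvest d t).sum = t.countDepth (d + 1) := by
  induction d generalizing t with
  | zero =>
    obtain ⟨cs⟩ := t
    rw [harvest, countDepth_succ]
    simp only [List.sum_cons, List.sum_nil, add_zero]
    rw [List.map_congr_left (g := fun _ => 1), List.map_const']
    · simp [List.sum_replicate]
    · intro c _; obtain ⟨ds⟩ := c; exact countDepth_zero ds
  | succ d ih =>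
    obtain ⟨cs⟩ := t
    rw [harvest, countDepth_succ, List.sum_flatten, List.map_map]
    congr 1
    apply List.map_congr_left
    intro c _
    exact ih c

lemma graft_zero (t : PTree) (cs : List ℕ) :
    graft 0 t cs = (.node (List.replicate (cs.headD 0) (.node [])), cs.tail) := by
  obtain ⟨ts⟩ := t; rw [graft]

lemma graft_succ (d : ℕ) (ts : List PTree) (cs : List ℕ) :
    graft (d+1) (.node ts) cs = (PTree.node (graftList d ts cs).1, (graftList d ts cs).2) := by
  rw [graft]

lemma graftList_nil (d : ℕ) (cs : List ℕ) : graftList d [] cs = ([], cs) := by rw [graftList]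

lemma graftList_cons (d : ℕ) (t : PTree) (ts : List PTree) (cs : List ℕ) :
    graftList d (t::ts) cs =
      ((graft d t cs).1 :: (graftList d ts (graft d t cs).2).1,
        (graftList d ts (graft d t cs).2).2) := by
  rw [graftList]

lemma graft_spec (d : ℕ) : ∀ (T : PTree) (cs : List ℕ), T.height ≤ d → T.countDepth d ≤ cs.length →
    (graft d T cs).2 = cs.drop (T.countDepth d) ∧
    prune d (graft d T cs).1 = T ∧
    harvest d (graft d T cs).1 = cs.take (T.countDepth d) ∧
    (graft d T cs).1.size = T.size + (cs.take (T.countDepth d)).sum ∧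
    (graft d T cs).1.countDepth (d+1) = (cs.take (T.countDepth d)).sum ∧
    (graft d T cs).1.height ≤ d + 1 := by
  induction d with
  | zero =>
    intro T cs hh hc
    have hT : T = .node [] := height_eq_zero (by omega)
    subst hT
    rw [countDepth_zero] at hc ⊢
    obtain ⟨a, cs', rfl⟩ : ∃ a cs', cs = a :: cs' := by
      cases cs with
      | nil => simp at hc
      | cons a cs' => exact ⟨a, cs', rfl⟩
    rw [graft_zero]
    refine ⟨by simp, by rw [prune], ?_, ?_, ?_, ?_⟩
    · rw [harvest]; simp
    · rw [size_node, size_node]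
      simp [List.map_replicate, List.sum_replicate, size_node]
    · rw [countDepth_succ]
      simp [List.map_replicate, List.sum_replicate, countDepth_zero]
    · rw [height_le_iff]
      intro c hc
      rw [List.eq_of_mem_replicate hc, height_node]
      simp
  | succ d ih =>
    -- list version
    have GLem : ∀ (ts : List PTree) (cs : List ℕ), (∀ c ∈ ts, c.height ≤ d) →
        (ts.map fun c => c.countDepth d).sum ≤ cs.length →
        (graftList d ts cs).2 = cs.drop ((ts.map fun c => c.countDepth d).sum) ∧
        (graftList d ts cs).1.map (prune d) = ts ∧
        ((graftList d ts cs).1.map (harvest d)).flatten = cs.take ((ts.map fun c => c.countDepth d).sum) ∧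
        ((graftList d ts cs).1.map PTree.size).sum = (ts.map PTree.size).sum + (cs.take ((ts.map fun c => c.countDepth d).sum)).sum ∧
        ((graftList d ts cs).1.map fun r => r.countDepth (d+1)).sum = (cs.take ((ts.map fun c => c.countDepth d).sum)).sum ∧
        ∀ r ∈ (graftList d ts cs).1, r.height ≤ d + 1 := by
      intro ts
      induction ts with
      | nil => intro cs _ _; rw [graftList_nil]; simp
      | cons t ts ihl =>
        intro cs hht hcl
        simp only [List.map_cons, List.sum_cons] at hcl ⊢
        set m₁ := t.countDepth d with hm₁
        set M' := (ts.map fun c => c.countDepth d).sum with hM'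
        have h1 := ih t cs (hht t (by simp)) (by omega)
        obtain ⟨e2, epr, eha, esz, ecd, ehe⟩ := h1
        rw [← hm₁] at e2 eha esz ecd
        have hlen2 : M' ≤ ((graft d t cs).2).length := by
          rw [e2, List.length_drop]; omega
        have h2 := ihl (graft d t cs).2 (fun c hc => hht c (by simp [hc])) hlen2
        obtain ⟨f2, fpr, fha, fsz, fcd, fhe⟩ := h2
        rw [graftList_cons]
        simp only [List.map_cons, List.sum_cons, List.flatten_cons]
        have hdrop : (graft d t cs).2 = cs.drop m₁ := e2
        have htake : cs.take (m₁ + M') = cs.take m₁ ++ (cs.drop m₁).take M' := List.take_add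
        have hsum : (cs.take (m₁ + M')).sum = (cs.take m₁).sum + ((cs.drop m₁).take M').sum := by
          rw [htake, List.sum_append]
        refine ⟨?_, ?_, ?_, ?_, ?_, ?_⟩
        · rw [f2, hdrop, List.drop_drop]
        · rw [epr, fpr]
        · rw [eha, fha, hdrop, htake]
        · rw [esz, fsz, hdrop, hsum]; omega
        · rw [ecd, fcd, hdrop, hsum]
        · intro r hr
          rcases List.mem_cons.mp hr with rfl | hr
          · exact ehe
          · exact fhe r hr
    intro T cs hh hc
    obtain ⟨ts⟩ := T
    have hht : ∀ c ∈ ts, c.height ≤ d := by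
      intro c hcc; have := (height_le_iff.mp hh) c hcc; omega
    rw [countDepth_succ] at hc ⊢
    obtain ⟨g2, gpr, gha, gsz, gcd, ghe⟩ := GLem ts cs hht hc
    rw [graft_succ]
    refine ⟨g2, ?_, ?_, ?_, ?_, ?_⟩
    · rw [prune, gpr]
    · rw [harvest, gha]
    · rw [size_node, size_node, gsz]; omega
    · rw [countDepth_succ, gcd]
    · rw [height_le_iff]
      intro r hr
      have := ghe r hr
      omega

lemma graft_prune_harvest (d : ℕ) : ∀ (T : PTree) (rest : List ℕ), T.height ≤ d + 1 →
    graft d (prune d T) (harvest d T ++ rest) = (T, rest) := by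
  induction d with
  | zero =>
    intro T rest hh
    obtain ⟨cs⟩ := T
    rw [prune, harvest, graft_zero]
    simp only [List.cons_append, List.nil_append, List.headD_cons, List.tail_cons]
    have : List.replicate cs.length (PTree.node []) = cs := by
      symm
      rw [List.eq_replicate_iff]
      refine ⟨rfl, ?_⟩
      intro b hb
      exact height_eq_zero (by have := height_child_lt hb; omega)
    rw [this]
  | succ d ih =>
    have GLPH : ∀ (ts : List PTree) (rest : List ℕ), (∀ c ∈ ts, c.height ≤ d + 1) →
        graftList d (ts.map (prune d)) (((ts.map (harvest d)).flatten) ++ rest) = (ts, rest) := by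
      intro ts
      induction ts with
      | nil => intro rest _; simp [graftList_nil]
      | cons t ts ihl =>
        intro rest hht
        simp only [List.map_cons, List.flatten_cons, List.append_assoc]
        rw [graftList_cons]
        rw [ih t ((ts.map (harvest d)).flatten ++ rest) (hht t (by simp))]
        rw [ihl rest (fun c hc => hht c (by simp [hc]))]
    intro T rest hh
    obtain ⟨cs⟩ := T
    rw [prune, harvest, graft_succ]
    rw [GLPH cs rest (fun c hc => by have := height_child_lt hc; omega)]

/-! ### encoding and finiteness -/

def enc : PTree → List Bool
  | .node cs => true :: ((cs.attach.map fun c => enc c.1).flatten ++ [false])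
decreasing_by have := List.sizeOf_lt_of_mem c.2; simp only [PTree.node.sizeOf_spec] at *; omega

def encL (cs : List PTree) : List Bool := (cs.map enc).flatten

lemma sum_map_two_mul (cs : List PTree) :
    (cs.map fun c => 2 * c.size).sum = 2 * (cs.map PTree.size).sum := by
  induction cs with
  | nil => simp
  | cons a l ih =>
    simp only [List.map_cons, List.sum_cons]
    rw [ih]
    ring

lemma enc_node (cs : List PTree) : enc (.node cs) = true :: (encL cs ++ [false]) := by
  rw [enc, encL]
  congr 2
  exact congrArg List.flatten (List.attach_map_val (l := cs) (f := enc))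

lemma encL_nil : encL [] = [] := rfl

lemma encL_cons (c : PTree) (cs : List PTree) : encL (c :: cs) = enc c ++ encL cs := by
  simp [encL]

lemma enc_ne_nil (t : PTree) : enc t ≠ [] := by
  obtain ⟨cs⟩ := t; rw [enc_node]; simp

lemma sizeOf_node (cs : List PTree) : sizeOf (PTree.node cs) = 1 + sizeOf cs := by
  simp [PTree.node.sizeOf_spec]

lemma pathVal_append (a b : List Bool) : pathVal (a ++ b) = pathVal a + pathVal b := by
  simp [pathVal]

lemma pathVal_cons_true (a : List Bool) : pathVal (true :: a) = 1 + pathVal a := by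
  simp [pathVal]

lemma pathVal_singleton_false : pathVal [false] = -1 := by simp [pathVal]

lemma prefix_concat_cases {q l : List Bool} {x : Bool} (h : q <+: l ++ [x]) :
    q <+: l ∨ q = l ++ [x] := by
  rcases List.prefix_or_prefix_of_prefix h (List.prefix_append l [x]) with h1 | h1
  · exact Or.inl h1
  · obtain ⟨r, rfl⟩ := h1
    have hr : r <+: [x] := (List.prefix_append_right_inj l).mp h
    rcases hr with ⟨r2, hr2⟩
    cases r with
    | nil => exact Or.inl (by simp)
    | cons y r' =>
      cases r' with
      | nil =>
        right
        have : y = x := by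
          have := hr2
          simp at this
          tauto
        rw [this]
      | cons z r'' => simp at hr2

/-- Balance property for a list of trees, assuming it for each member. -/
lemma ball_of {cs : List PTree}
    (H : ∀ c ∈ cs, pathVal (enc c) = 0 ∧ ∀ p, p <+: enc c → 0 ≤ pathVal p) :
    pathVal (encL cs) = 0 ∧ ∀ q, q <+: encL cs → 0 ≤ pathVal q := by
  induction cs with
  | nil => constructor <;> simp [encL_nil, pathVal]
  | cons c cs ih =>
    obtain ⟨h1, h2⟩ := H c (by simp)
    obtain ⟨ih1, ih2⟩ := ih (fun c hc => H c (by simp [hc]))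
    rw [encL_cons]
    constructor
    · rw [pathVal_append, h1, ih1]; ring
    · intro q hq
      rcases List.prefix_or_prefix_of_prefix hq (List.prefix_append (enc c) (encL cs)) with hh | hh
      · exact h2 q hh
      · obtain ⟨r, rfl⟩ := hh
        have hr : r <+: encL cs := (List.prefix_append_right_inj (enc c)).mp hq
        rw [pathVal_append, h1, zero_add]
        exact ih2 r hr

lemma bal (t : PTree) : pathVal (enc t) = 0 ∧ ∀ p, p <+: enc t → 0 ≤ pathVal p := by
  have main : ∀ N (t : PTree), sizeOf t ≤ N →
      pathVal (enc t) = 0 ∧ ∀ p, p <+: enc t → 0 ≤ pathVal p := by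
    intro N
    induction N with
    | zero =>
      intro t h
      obtain ⟨cs⟩ := t
      rw [sizeOf_node] at h
      omega
    | succ N ih =>
      intro t h
      obtain ⟨cs⟩ := t
      have hcs : ∀ c ∈ cs, sizeOf c ≤ N := by
        intro c hc
        have := List.sizeOf_lt_of_mem hc
        rw [sizeOf_node] at h
        omega
      obtain ⟨h1, h2⟩ := ball_of (fun c hc => ih c (hcs c hc))
      rw [enc_node]
      constructor
      · rw [pathVal_cons_true, pathVal_append, h1, pathVal_singleton_false]
        ring
      · intro p hp
        cases p with
        | nil => simp [pathVal]
        | cons y q =>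
          obtain ⟨rfl, hq⟩ : y = true ∧ q <+: encL cs ++ [false] := by
            rcases hp with ⟨r, hr⟩
            simp only [List.cons_append] at hr
            injection hr with hy hrest
            exact ⟨hy, ⟨r, hrest⟩⟩
          rcases prefix_concat_cases hq with hh | rfl
          · have := h2 q hh
            rw [pathVal_cons_true]
            omega
          · rw [pathVal_cons_true, pathVal_append, h1, pathVal_singleton_false]
            omega
  exact main (sizeOf t) t le_rfl

lemma balpos (t : PTree) : ∀ p, p <+: enc t → p ≠ [] → p ≠ enc t → 0 < pathVal p := by
  obtain ⟨cs⟩ := t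
  intro p hp hne hnf
  have hb : ∀ c ∈ cs, pathVal (enc c) = 0 ∧ ∀ p, p <+: enc c → 0 ≤ pathVal p :=
    fun c _ => bal c
  obtain ⟨h1, h2⟩ := ball_of hb
  rw [enc_node] at hp hnf
  cases p with
  | nil => exact absurd rfl hne
  | cons y q =>
    obtain ⟨rfl, hq⟩ : y = true ∧ q <+: encL cs ++ [false] := by
      rcases hp with ⟨r, hr⟩
      simp only [List.cons_append] at hr
      injection hr with hy hrest
      exact ⟨hy, ⟨r, hrest⟩⟩
    rcases prefix_concat_cases hq with hh | rfl
    · have := h2 q hh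
      rw [pathVal_cons_true]
      omega
    · exact absurd rfl hnf

/-- encodings cancel: if two encodings start a common list, they are equal. -/
lemma enc_eq_of_append {t1 t2 : PTree} {r1 r2 : List Bool}
    (h : enc t1 ++ r1 = enc t2 ++ r2) : enc t1 = enc t2 := by
  have h1 : enc t1 <+: enc t2 ++ r2 := h ▸ List.prefix_append _ _
  have h2 : enc t2 <+: enc t2 ++ r2 := List.prefix_append _ _
  have key : ∀ a b : PTree, enc a <+: enc b → enc a = enc b := by
    intro a b hab
    by_contra hne
    have := balpos b (enc a) hab (enc_ne_nil a) hne
    rw [(bal a).1] at this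
    omega
  rcases List.prefix_or_prefix_of_prefix h1 h2 with hh | hh
  · exact key _ _ hh
  · exact (key _ _ hh).symm

lemma injL_of {cs1 : List PTree}
    (H : ∀ c ∈ cs1, ∀ t2 : PTree, enc c = enc t2 → c = t2) :
    ∀ cs2 : List PTree, encL cs1 = encL cs2 → cs1 = cs2 := by
  induction cs1 with
  | nil =>
    intro cs2 h
    cases cs2 with
    | nil => rfl
    | cons c cs =>
      rw [encL_nil, encL_cons] at h
      exact absurd (List.append_eq_nil_iff.mp h.symm).1 (enc_ne_nil c)
  | cons c1 cs1 ih =>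
    intro cs2 h
    cases cs2 with
    | nil =>
      rw [encL_nil, encL_cons] at h
      exact absurd (List.append_eq_nil_iff.mp h).1 (enc_ne_nil c1)
    | cons c2 cs2 =>
      rw [encL_cons, encL_cons] at h
      have he : enc c1 = enc c2 := enc_eq_of_append h
      have hc : c1 = c2 := H c1 (by simp) c2 he
      subst hc
      have ht : encL cs1 = encL cs2 := List.append_cancel_left h
      exact congrArg (c1 :: ·) (ih (fun c hcc => H c (by simp [hcc])) cs2 ht)

lemma enc_injective : Function.Injective enc := by
  have main : ∀ N (t1 t2 : PTree), sizeOf t1 ≤ N → enc t1 = enc t2 → t1 = t2 := by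
    intro N
    induction N with
    | zero =>
      intro t1 t2 h
      obtain ⟨cs⟩ := t1
      rw [sizeOf_node] at h
      omega
    | succ N ih =>
      intro t1 t2 h he
      obtain ⟨cs1⟩ := t1
      obtain ⟨cs2⟩ := t2
      rw [enc_node, enc_node] at he
      injection he with _ he2
      have hL : encL cs1 = encL cs2 := List.append_cancel_right he2
      have hcs : ∀ c ∈ cs1, sizeOf c ≤ N := by
        intro c hc
        have := List.sizeOf_lt_of_mem hc
        rw [sizeOf_node] at h
        omega
      have := injL_of (fun c hc t2 het => ih c t2 (hcs c hc) het) cs2 hL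
      rw [this]
  intro t1 t2 h
  exact main (sizeOf t1) t1 t2 le_rfl h

lemma enc_length (t : PTree) : (enc t).length = 2 * t.size := by
  have main : ∀ N (t : PTree), sizeOf t ≤ N → (enc t).length = 2 * t.size := by
    intro N
    induction N with
    | zero =>
      intro t h
      obtain ⟨cs⟩ := t
      rw [sizeOf_node] at h
      omega
    | succ N ih =>
      intro t h
      obtain ⟨cs⟩ := t
      have hcs : ∀ c ∈ cs, sizeOf c ≤ N := by
        intro c hc
        have := List.sizeOf_lt_of_mem hc
        rw [sizeOf_node] at h
        omega
      rw [enc_node, size_node]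
      simp only [List.length_cons, List.length_append, List.length_singleton]
      rw [encL, List.length_flatten, List.map_map]
      have : (cs.map (List.length ∘ enc)).sum = (cs.map fun c => 2 * c.size).sum := by
        congr 1
        apply List.map_congr_left
        intro c hc
        exact ih c (hcs c hc)
      rw [this]
      rw [sum_map_two_mul]
      simp
      omega
  exact main (sizeOf t) t le_rfl

instance finite_size_subtype (s : ℕ) : Finite {t : PTree // t.size = s} := by
  have : Finite {l : List Bool // l.length = 2 * s} := List.finite_length_eq _ _
  apply Finite.of_injective
    (f := fun x => (⟨enc x.1, by rw [enc_length, x.2]⟩ : {l : List Bool // l.length = 2 * s}))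
  intro a b hab
  exact Subtype.ext (enc_injective (Subtype.ext_iff.mp hab))

/-! ### counting compositions -/

lemma nat_card_sigma {ι : Type*} [Fintype ι] (β : ι → Type*) [∀ i, Finite (β i)] :
    Nat.card (Σ i, β i) = ∑ i, Nat.card (β i) := by
  have : ∀ i, Fintype (β i) := fun i => Fintype.ofFinite _
  classical
  simp [Nat.card_eq_fintype_card, Fintype.card_sigma]

instance comp_finite (m k : ℕ) : Finite {cs : List ℕ // cs.length = m ∧ cs.sum = k} := by
  have hsub : {l : List ℕ | l.length = m ∧ l.sum = k} ⊆
      (fun (L : List (Fin (k+1))) => L.map Fin.val) '' {L | L.length = m} := by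
    rintro l ⟨hlen, hsum⟩
    refine ⟨l.attach.map (fun x => (⟨x.1, by
      have := List.le_sum_of_mem x.2
      omega⟩ : Fin (k+1))), ?_, ?_⟩
    · simp [hlen]
    · simp only [List.map_map]
      exact (List.attach_map_val (l := l) (f := id)).trans (List.map_id l)
  have hfin : {l : List ℕ | l.length = m ∧ l.sum = k}.Finite :=
    Set.Finite.subset (Set.Finite.image _ (List.finite_length_eq _ m)) hsub
  exact hfin.to_subtype

lemma headD_add_tail_sum {cs : List ℕ} (h : cs ≠ []) : cs.headD 0 + cs.tail.sum = cs.sum := by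
  cases cs with
  | nil => exact absurd rfl h
  | cons a t => simp

lemma headD_cons_tail {cs : List ℕ} (h : cs ≠ []) : cs.headD 0 :: cs.tail = cs := by
  cases cs with
  | nil => exact absurd rfl h
  | cons a t => simp

lemma comp_card : ∀ m k : ℕ, Nat.card {cs : List ℕ // cs.length = m + 1 ∧ cs.sum = k} =
    (m + 1 + k - 1).choose m := by
  intro m
  induction m with
  | zero =>
    intro k
    have : Unique {cs : List ℕ // cs.length = 0 + 1 ∧ cs.sum = k} := by
      refine ⟨⟨⟨[k], by simp⟩⟩, ?_⟩
      rintro ⟨cs, h1, h2⟩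
      obtain ⟨a, rfl⟩ : ∃ a, cs = [a] := by
        cases cs with
        | nil => simp at h1
        | cons a t =>
          cases t with
          | nil => exact ⟨a, rfl⟩
          | cons b t => simp at h1
      simp at h2
      subst h2
      rfl
    rw [Nat.card_unique]
    simp
  | succ m ih =>
    intro k
    have hne : ∀ (x : {cs : List ℕ // cs.length = m + 2 ∧ cs.sum = k}), x.1 ≠ [] := by
      rintro ⟨cs, h1, h2⟩ h
      subst h
      simp at h1
    have e : {cs : List ℕ // cs.length = m + 2 ∧ cs.sum = k} ≃
        Σ j : Fin (k + 1), {cs : List ℕ // cs.length = m + 1 ∧ cs.sum = k - j} := by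
      refine ⟨fun x => ⟨⟨x.1.headD 0, ?_⟩, ⟨x.1.tail, ?_, ?_⟩⟩, fun y => ⟨(y.1 : ℕ) :: y.2.1, ?_, ?_⟩, ?_, ?_⟩
      · have h := headD_add_tail_sum (hne x)
        rw [x.2.2] at h
        omega
      · have := x.2.1
        rw [← headD_cons_tail (hne x)] at this
        simpa using this
      · have h := headD_add_tail_sum (hne x)
        rw [x.2.2] at h
        show x.1.tail.sum = k - (x.1.headD 0)
        omega
      · simp [y.2.2.1]
      · have hj : (y.1 : ℕ) ≤ k := by omega
        simp [y.2.2.2]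
        omega
      · rintro ⟨cs, h1, h2⟩
        exact Subtype.ext (headD_cons_tail (by rintro rfl; simp at h1))
      · rintro ⟨⟨j, hj⟩, ⟨cs, h1, h2⟩⟩
        rfl
    rw [Nat.card_congr e, nat_card_sigma]
    have : ∀ j : Fin (k+1), Nat.card {cs : List ℕ // cs.length = m + 1 ∧ cs.sum = k - j} =
        (m + (k - (j:ℕ))).choose m := by
      intro j
      rw [ih (k - j)]
      congr 1
      omega
    rw [Finset.sum_congr rfl (fun j _ => this j)]
    rw [Fin.sum_univ_eq_sum_range (fun j => (m + (k - j)).choose m) (k+1)]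
    have hrefl : ∑ j ∈ Finset.range (k+1), (m + (k - j)).choose m
        = ∑ j ∈ Finset.range (k+1), (m + j).choose m := by
      have := Finset.sum_range_reflect (fun j => (m + j).choose m) (k+1)
      simpa using this
    rw [hrefl]
    have hicc : ∑ j ∈ Finset.range (k+1), (m + j).choose m
        = ∑ d ∈ Finset.Icc m (m + k), d.choose m := by
      rw [← Finset.Ico_add_one_right_eq_Icc, Finset.sum_Ico_eq_sum_range]
      apply Finset.sum_congr
      · congr 1; omega
      · intro i _; rfl
    rw [hicc, Nat.sum_Icc_choose]
    congr 1 <;> omega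

instance tset_finite (n h k : ℕ) :
    Finite {tr : PTree // tr.size = n + 1 ∧ tr.height = h + 1 ∧ tr.countDepth (h + 1) = k} :=
  Finite.of_injective
    (fun x => (⟨x.1, x.2.1⟩ : {t : PTree // t.size = n + 1}))
    (by
      intro a b hab
      have hab' : (⟨a.1, a.2.1⟩ : {t : PTree // t.size = n + 1}) = ⟨b.1, b.2.1⟩ := hab
      have hv : (a.1 : PTree) = b.1 := Subtype.mk_eq_mk.mp hab'
      exact Subtype.ext hv)

lemma graft_full {D : ℕ} {T : PTree} {cs : List ℕ} (hh : T.height = D)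
    (hc : T.countDepth D = cs.length) :
    (graft D T cs).1.size = T.size + cs.sum ∧
    (graft D T cs).1.countDepth (D+1) = cs.sum ∧
    prune D (graft D T cs).1 = T ∧
    harvest D (graft D T cs).1 = cs ∧
    (graft D T cs).1.countDepth D = T.countDepth D ∧
    (graft D T cs).1.height ≤ D + 1 := by
  have spec := graft_spec D T cs (le_of_eq hh) (le_of_eq hc)
  have htake : cs.take (T.countDepth D) = cs := by rw [hc]; exact List.take_length
  obtain ⟨e2, epr, eha, esz, ecd, ehe⟩ := spec
  rw [htake] at eha esz ecd
  refine ⟨esz, ecd, epr, eha, ?_, ehe⟩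
  have hp := countDepth_prune (le_refl D) (graft D T cs).1
  rw [epr] at hp
  exact hp.symm

theorem statement2 (n h k : ℕ) (hh : 1 ≤ h) (hk1 : 1 ≤ k) (hkn : k ≤ n) :
    t n h k = ∑ m ∈ Finset.Icc 1 (n - k), (m + k - 1).choose (m - 1) * t (n - k) (h - 1) m := by
  obtain ⟨H, rfl⟩ : ∃ H, h = H + 1 := ⟨h - 1, by omega⟩
  obtain ⟨q, rfl⟩ : ∃ q, n = k + q := ⟨n - k, by omega⟩
  rw [show k + q - k = q from by omega, show H + 1 - 1 = H from rfl]
  -- D is the pruning depth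
  set D := H + 1 with hD
  have e : {tr : PTree // tr.size = (k + q) + 1 ∧ tr.height = D + 1 ∧ tr.countDepth (D + 1) = k} ≃
      Σ m : ↥(Finset.Icc 1 q),
        {tr : PTree // tr.size = q + 1 ∧ tr.height = H + 1 ∧ tr.countDepth (H + 1) = (m : ℕ)} ×
        {cs : List ℕ // cs.length = (m : ℕ) ∧ cs.sum = k} := by
    refine ⟨fun x => ⟨⟨x.1.countDepth D, ?_⟩, ⟨prune D x.1, ?_, ?_, ?_⟩, ⟨harvest D x.1, ?_, ?_⟩⟩,
      fun y => ⟨(graft D y.2.1.1 y.2.2.1).1, ?_, ?_, ?_⟩, ?_, ?_⟩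
    · -- membership in Icc 1 q
      rw [Finset.mem_Icc]
      constructor
      · exact countDepth_pos_of_le_height (by rw [x.2.2.1]; omega)
      · have h1 : (prune D x.1).countDepth D = x.1.countDepth D :=
          countDepth_prune (le_refl D) x.1
        have h2 : (prune D x.1).countDepth (H + 1) < (prune D x.1).size :=
          countDepth_succ_lt_size _ H
        have h3 : (prune D x.1).size + x.1.countDepth (D + 1) = x.1.size :=
          size_prune_add (by rw [x.2.2.1])
        rw [x.2.2.2, x.2.1] at h3
        rw [← hD] at h2
        omega
    · -- size of pruned tree
      have h3 : (prune D x.1).size + x.1.countDepth (D + 1) = x.1.size :=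
        size_prune_add (by rw [x.2.2.1])
      rw [x.2.2.2, x.2.1] at h3
      omega
    · -- height of pruned tree
      refine le_antisymm (height_prune_le D x.1) ?_
      apply le_height_of_countDepth_pos (d := D)
      rw [countDepth_prune (le_refl D) x.1]
      exact countDepth_pos_of_le_height (by rw [x.2.2.1]; omega)
    · -- countDepth of pruned tree
      exact countDepth_prune (le_refl D) x.1
    · exact (harvest_length D x.1).trans rfl
    · exact (harvest_sum D x.1).trans x.2.2.2
    · -- size of grafted tree
      have gf := graft_full y.2.1.2.2.1 (by rw [y.2.1.2.2.2, y.2.2.2.1])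
      rw [gf.1, y.2.1.2.1, y.2.2.2.2]
      omega
    · -- height of grafted tree
      have gf := graft_full y.2.1.2.2.1 (by rw [y.2.1.2.2.2, y.2.2.2.1])
      refine le_antisymm gf.2.2.2.2.2 ?_
      apply le_height_of_countDepth_pos (d := D + 1)
      rw [gf.2.1, y.2.2.2.2]
      omega
    · -- countDepth (D+1) of grafted tree
      have gf := graft_full y.2.1.2.2.1 (by rw [y.2.1.2.2.2, y.2.2.2.1])
      rw [gf.2.1, y.2.2.2.2]
    · -- left inverse
      intro x
      apply Subtype.ext
      show (graft D (prune D x.1) (harvest D x.1)).1 = x.1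
      rw [← List.append_nil (harvest D x.1)]
      rw [graft_prune_harvest D x.1 [] (by rw [x.2.2.1])]
    · -- right inverse
      rintro ⟨⟨m, hm⟩, ⟨T, hT1, hT2, hT3⟩, ⟨cs, hcs1, hcs2⟩⟩
      have gf := graft_full (D := D) (T := T) (cs := cs) hT2 (by rw [hT3, hcs1])
      set G := (graft D T cs).1 with hG
      have hm' : G.countDepth D = m := by rw [gf.2.2.2.2.1, hT3]
      have hpr : prune D G = T := gf.2.2.1
      have hha : harvest D G = cs := gf.2.2.2.1
      subst hm'
      exact Sigma.ext rfl (heq_of_eq (by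
        refine Prod.ext (Subtype.ext ?_) (Subtype.ext ?_)
        · exact hpr
        · exact hha))
  rw [show t (k + q) (H + 1) k = Nat.card {tr : PTree // tr.size = (k + q) + 1 ∧
      tr.height = D + 1 ∧ tr.countDepth (D + 1) = k} from rfl]
  rw [Nat.card_congr e, nat_card_sigma]
  rw [Finset.sum_coe_sort (Finset.Icc 1 q) (fun m =>
    Nat.card ({tr : PTree // tr.size = q + 1 ∧ tr.height = H + 1 ∧ tr.countDepth (H + 1) = m} ×
      {cs : List ℕ // cs.length = m ∧ cs.sum = k}))]
  apply Finset.sum_congr rfl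
  intro m hmm
  rw [Finset.mem_Icc] at hmm
  rw [Nat.card_prod]
  have hc : Nat.card {cs : List ℕ // cs.length = m ∧ cs.sum = k} = (m + k - 1).choose (m - 1) := by
    obtain ⟨m', rfl⟩ : ∃ m', m = m' + 1 := ⟨m - 1, by omega⟩
    rw [comp_card m' k]
    congr 1 <;> omega
  rw [hc]
  rw [show t q H m = Nat.card {tr : PTree // tr.size = q + 1 ∧ tr.height = H + 1 ∧
      tr.countDepth (H + 1) = m} from rfl]
  ring

end Paper
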